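/- Let G = (A, (Γ, γ, φ)) be a Manna-Pnueli game over arena A = (V, E) such that every event of Γ occurs in at most one atom of φ. Let Γ_F and Γ_G be the sets of events occurring in F-atoms, respectively G-atoms, of φ (the local events), and let Γ_EL be the set of events occurring in GF- or FG-atoms of φ. Define the transformed arena A' with node set V × 2^{Γ_F ∪ Γ_G}, edges from (v, L) to (v', upd(v, L)) for every edge (v, v') of A, where upd(v, L) = ((L ∩ γ(v)) ∩ Γ_G) ∪ ((L ∪ γ(v)) ∩ Γ_F), with (v, L) owned by the owner of v, and labeling γ'(v, L) = (γ(v) ∩ Γ_EL) ∪ L. For M ⊆ Γ let φ_M denote the formula obtained from φ by replacing every atom F a and G a by ⊤ if a ∈ M and by ⊥ otherwise. Define the objective O_2 on A' to contain exactly those plays (v_0, L_0)(v_1, L_1)... for which there exists M ⊆ Γ_F ∪ Γ_G such that L_n = M for all sufficiently large n and the play satisfies φ_M under the labeling γ'. Then for every node v ∈ V, the system player wins v in the MP game G if and only if the system player wins (v, Γ_G) in the game G_2 = (A', O_2). -/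

import Mathlib

/-- A game arena: a directed graph whose nodes are partitioned into system
nodes (`sys v` holds) and environment nodes, and in which every node has at
least one successor. -/
structure Arena (V : Type) where
  E : V → V → Prop
  sys : V → Prop
  succ_nonempty : ∀ v, ∃ w, E v w

/-- A play is an infinite path in the arena. -/
def Arena.IsPlay {V : Type} (A : Arena V) (π : ℕ → V) : Prop :=
  ∀ n, A.E (π n) (π (n + 1))

/-- A strategy assigns to every history `h = v₀...v_{n-1}` and current node
`v_n` a next node. -/
def Strategy (V : Type) : Type := List V → V → V

/-- A system strategy is valid if it always chooses successors at system
nodes. -/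
def Arena.ValidSysStrat {V : Type} (A : Arena V) (σ : Strategy V) : Prop :=
  ∀ (h : List V) (v : V), A.sys v → A.E v (σ h v)

/-- An environment strategy is valid if it always chooses successors at
environment nodes. -/
def Arena.ValidEnvStrat {V : Type} (A : Arena V) (σ : Strategy V) : Prop :=
  ∀ (h : List V) (v : V), ¬ A.sys v → A.E v (σ h v)

/-- A play `π` is compatible with a system strategy `σ` if at every system
node the play follows `σ`. -/
def Arena.SysCompatible {V : Type} (A : Arena V) (σ : Strategy V)
    (π : ℕ → V) : Prop :=
  ∀ n, A.sys (π n) → π (n + 1) = σ ((List.range n).map π) (π n)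

/-- A play `π` is compatible with an environment strategy `σ` if at every
environment node the play follows `σ`. -/
def Arena.EnvCompatible {V : Type} (A : Arena V) (σ : Strategy V)
    (π : ℕ → V) : Prop :=
  ∀ n, ¬ A.sys (π n) → π (n + 1) = σ ((List.range n).map π) (π n)

/-- The system player wins node `v` for the objective `O` if it has a valid
strategy such that all compatible plays starting at `v` are in `O`. -/
def Arena.SysWins {V : Type} (A : Arena V) (O : (ℕ → V) → Prop) (v : V) :
    Prop :=
  ∃ σ : Strategy V, A.ValidSysStrat σ ∧
    ∀ π : ℕ → V, A.IsPlay π → π 0 = v → A.SysCompatible σ π → O π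

/-- The environment player wins node `v` for the objective `O` if it has a
valid strategy such that all compatible plays starting at `v` are not in
`O`. -/
def Arena.EnvWins {V : Type} (A : Arena V) (O : (ℕ → V) → Prop) (v : V) :
    Prop :=
  ∃ σ : Strategy V, A.ValidEnvStrat σ ∧
    ∀ π : ℕ → V, A.IsPlay π → π 0 = v → A.EnvCompatible σ π → ¬ O π

/-- Manna-Pnueli formulas over a set `Γ` of events: positive Boolean formulas
over atoms `GF a`, `FG a`, `F a`, `G a`. -/
inductive MPForm (Γ : Type) where
  | tt : MPForm Γ
  | ff : MPForm Γ
  | gf : Γ → MPForm Γ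
  | fg : Γ → MPForm Γ
  | fa : Γ → MPForm Γ
  | ga : Γ → MPForm Γ
  | and : MPForm Γ → MPForm Γ → MPForm Γ
  | or : MPForm Γ → MPForm Γ → MPForm Γ

/-- Satisfaction of a Manna-Pnueli formula on an infinite sequence of sets of
events. -/
def MPForm.sat {Γ : Type} (π : ℕ → Finset Γ) : MPForm Γ → Prop
  | .tt => True
  | .ff => False
  | .gf a => ∀ i, ∃ j > i, a ∈ π j
  | .fg a => ∃ i, ∀ j > i, a ∈ π j
  | .fa a => ∃ i, a ∈ π i
  | .ga a => ∀ i, a ∈ π i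
  | .and φ ψ => φ.sat π ∧ ψ.sat π
  | .or φ ψ => φ.sat π ∨ ψ.sat π

/-- The events occurring in `F`-atoms of a Manna-Pnueli formula. -/
def MPForm.fEvents {Γ : Type} [DecidableEq Γ] : MPForm Γ → Finset Γ
  | .fa a => {a}
  | .and φ ψ => φ.fEvents ∪ ψ.fEvents
  | .or φ ψ => φ.fEvents ∪ ψ.fEvents
  | _ => ∅

/-- The events occurring in `G`-atoms of a Manna-Pnueli formula. -/
def MPForm.gEvents {Γ : Type} [DecidableEq Γ] : MPForm Γ → Finset Γ
  | .ga a => {a}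
  | .and φ ψ => φ.gEvents ∪ ψ.gEvents
  | .or φ ψ => φ.gEvents ∪ ψ.gEvents
  | _ => ∅

/-- The events occurring in `GF`-atoms of a Manna-Pnueli formula. -/
def MPForm.gfEvents {Γ : Type} [DecidableEq Γ] : MPForm Γ → Finset Γ
  | .gf a => {a}
  | .and φ ψ => φ.gfEvents ∪ ψ.gfEvents
  | .or φ ψ => φ.gfEvents ∪ ψ.gfEvents
  | _ => ∅

/-- The events occurring in `FG`-atoms of a Manna-Pnueli formula. -/
def MPForm.fgEvents {Γ : Type} [DecidableEq Γ] : MPForm Γ → Finset Γ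
  | .fg a => {a}
  | .and φ ψ => φ.fgEvents ∪ ψ.fgEvents
  | .or φ ψ => φ.fgEvents ∪ ψ.fgEvents
  | _ => ∅

/-- The number of atoms of a Manna-Pnueli formula in which the event `a`
occurs. -/
def MPForm.atomCount {Γ : Type} [DecidableEq Γ] (a : Γ) : MPForm Γ → ℕ
  | .gf b => if b = a then 1 else 0
  | .fg b => if b = a then 1 else 0
  | .fa b => if b = a then 1 else 0
  | .ga b => if b = a then 1 else 0
  | .and φ ψ => φ.atomCount a + ψ.atomCount a
  | .or φ ψ => φ.atomCount a + ψ.atomCount a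
  | _ => 0

/-- The memory update function: remove from the memory `L` all `ΓG`-events
that do not occur in the label of the current node `v` and add all
`ΓF`-events that occur in the label of `v`. -/
def upd {V Γ : Type} [DecidableEq Γ] (γ : V → Finset Γ) (ΓF ΓG : Finset Γ)
    (v : V) (L : Finset Γ) : Finset Γ :=
  ((L ∩ γ v) ∩ ΓG) ∪ ((L ∪ γ v) ∩ ΓF)

/-- The transformed arena `A'` over `V × 2^Γ`, with edges from `(v, L)` to
`(v', upd(v, L))` for every edge `(v, v')` of `A`, and with `(v, L)` owned by
the owner of `v`. -/
def Arena.withMemory {V Γ : Type} [DecidableEq Γ] (A : Arena V)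
    (γ : V → Finset Γ) (ΓF ΓG : Finset Γ) : Arena (V × Finset Γ) where
  E p q := A.E p.1 q.1 ∧ q.2 = upd γ ΓF ΓG p.1 p.2
  sys p := A.sys p.1
  succ_nonempty p := by
    obtain ⟨w, hw⟩ := A.succ_nonempty p.1
    exact ⟨(w, upd γ ΓF ΓG p.1 p.2), hw, rfl⟩

/-- The formula `φ_M` obtained from `φ` by replacing every atom `F a` and
every atom `G a` by `⊤` if `a ∈ M` and by `⊥` otherwise. -/
def MPForm.restrict {Γ : Type} [DecidableEq Γ] (M : Finset Γ) :
    MPForm Γ → MPForm Γ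
  | .fa a => if a ∈ M then .tt else .ff
  | .ga a => if a ∈ M then .tt else .ff
  | .and φ ψ => .and (φ.restrict M) (ψ.restrict M)
  | .or φ ψ => .or (φ.restrict M) (ψ.restrict M)
  | φ => φ

open scoped Classical

namespace MPAux

variable {V Γ : Type} [DecidableEq Γ]

/-- The deterministic memory sequence along a play. -/
def memSeq (γ : V → Finset Γ) (ΓF ΓG : Finset Γ) (π : ℕ → V) : ℕ → Finset Γ
  | 0 => ΓG
  | n + 1 => upd γ ΓF ΓG (π n) (memSeq γ ΓF ΓG π n)

lemma memSeq_subset (γ : V → Finset Γ) (ΓF ΓG : Finset Γ) (π : ℕ → V) (n : ℕ) :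
    memSeq γ ΓF ΓG π n ⊆ ΓF ∪ ΓG := by
  cases n with
  | zero =>
    intro a ha
    exact Finset.mem_union_right _ ha
  | succ n =>
    intro a ha
    simp only [memSeq, upd, Finset.mem_union, Finset.mem_inter] at ha ⊢
    tauto

lemma mem_memSeq_F {γ : V → Finset Γ} {ΓF ΓG : Finset Γ} {π : ℕ → V} {a : Γ}
    (hF : a ∈ ΓF) (hG : a ∉ ΓG) (n : ℕ) :
    a ∈ memSeq γ ΓF ΓG π n ↔ ∃ k < n, a ∈ γ (π k) := by
  induction n with
  | zero => simp [memSeq, hG]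
  | succ n ih =>
    simp only [memSeq, upd, Finset.mem_union, Finset.mem_inter, ih]
    constructor
    · rintro (⟨_, h3⟩ | ⟨h1, _⟩)
      · exact absurd h3 hG
      · rcases h1 with ⟨k, hk, h⟩ | h
        · exact ⟨k, Nat.lt_succ_of_lt hk, h⟩
        · exact ⟨n, Nat.lt_succ_self n, h⟩
    · rintro ⟨k, hk, h⟩
      refine Or.inr ⟨?_, hF⟩
      rcases Nat.lt_succ_iff_lt_or_eq.mp hk with h' | rfl
      · exact Or.inl ⟨k, h', h⟩
      · exact Or.inr h

lemma mem_memSeq_G {γ : V → Finset Γ} {ΓF ΓG : Finset Γ} {π : ℕ → V} {a : Γ}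
    (hG : a ∈ ΓG) (hF : a ∉ ΓF) (n : ℕ) :
    a ∈ memSeq γ ΓF ΓG π n ↔ ∀ k < n, a ∈ γ (π k) := by
  induction n with
  | zero => simp [memSeq, hG]
  | succ n ih =>
    simp only [memSeq, upd, Finset.mem_union, Finset.mem_inter, ih]
    constructor
    · rintro (⟨⟨h1, h2⟩, _⟩ | ⟨_, hf⟩)
      · intro k hk
        rcases Nat.lt_succ_iff_lt_or_eq.mp hk with h' | rfl
        · exact h1 k h'
        · exact h2
      · exact absurd hf hF
    · intro h
      exact Or.inl ⟨⟨fun k hk => h k (Nat.lt_succ_of_lt hk), h n (Nat.lt_succ_self n)⟩, hG⟩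

/-- The stable value of the memory. -/
noncomputable def Mstab (γ : V → Finset Γ) (ΓF ΓG : Finset Γ) (π : ℕ → V) : Finset Γ :=
  (ΓG.filter fun a => ∀ k, a ∈ γ (π k)) ∪ (ΓF.filter fun a => ∃ k, a ∈ γ (π k))

lemma Mstab_subset (γ : V → Finset Γ) (ΓF ΓG : Finset Γ) (π : ℕ → V) :
    Mstab γ ΓF ΓG π ⊆ ΓF ∪ ΓG := by
  intro a ha
  simp only [Mstab, Finset.mem_union, Finset.mem_filter] at ha
  rcases ha with ⟨h, _⟩ | ⟨h, _⟩
  · exact Finset.mem_union_right _ h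
  · exact Finset.mem_union_left _ h

lemma mem_Mstab_F {γ : V → Finset Γ} {ΓF ΓG : Finset Γ} {π : ℕ → V} {a : Γ}
    (hF : a ∈ ΓF) (hG : a ∉ ΓG) :
    a ∈ Mstab γ ΓF ΓG π ↔ ∃ k, a ∈ γ (π k) := by
  simp [Mstab, hF, hG]

lemma mem_Mstab_G {γ : V → Finset Γ} {ΓF ΓG : Finset Γ} {π : ℕ → V} {a : Γ}
    (hG : a ∈ ΓG) (hF : a ∉ ΓF) :
    a ∈ Mstab γ ΓF ΓG π ↔ ∀ k, a ∈ γ (π k) := by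
  simp [Mstab, hF, hG]

lemma memSeq_stab [Fintype Γ] {γ : V → Finset Γ} {ΓF ΓG : Finset Γ} {π : ℕ → V}
    (hd : ∀ a, a ∈ ΓF → a ∉ ΓG) :
    ∃ N, ∀ n ≥ N, memSeq γ ΓF ΓG π n = Mstab γ ΓF ΓG π := by
  have key : ∀ a : Γ, ∃ Na, ∀ n ≥ Na,
      (a ∈ memSeq γ ΓF ΓG π n ↔ a ∈ Mstab γ ΓF ΓG π) := by
    intro a
    by_cases hF : a ∈ ΓF
    · have hG := hd a hF
      by_cases hex : ∃ k, a ∈ γ (π k)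
      · obtain ⟨k0, hk0⟩ := hex
        refine ⟨k0 + 1, fun n hn => ?_⟩
        rw [mem_memSeq_F hF hG, mem_Mstab_F hF hG]
        exact iff_of_true ⟨k0, by omega, hk0⟩ ⟨k0, hk0⟩
      · refine ⟨0, fun n _ => ?_⟩
        rw [mem_memSeq_F hF hG, mem_Mstab_F hF hG]
        push_neg at hex
        exact iff_of_false (by rintro ⟨k, _, h⟩; exact hex k h) (by rintro ⟨k, h⟩; exact hex k h)
    · by_cases hG : a ∈ ΓG
      · by_cases hall : ∀ k, a ∈ γ (π k)
        · refine ⟨0, fun n _ => ?_⟩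
          rw [mem_memSeq_G hG hF, mem_Mstab_G hG hF]
          exact iff_of_true (fun k _ => hall k) hall
        · push_neg at hall
          obtain ⟨k0, hk0⟩ := hall
          refine ⟨k0 + 1, fun n hn => ?_⟩
          rw [mem_memSeq_G hG hF, mem_Mstab_G hG hF]
          exact iff_of_false (fun h => hk0 (h k0 (by omega))) (fun h => hk0 (h k0))
      · refine ⟨0, fun n _ => ?_⟩
        refine iff_of_false (fun h => ?_) (fun h => ?_)
        · rcases Finset.mem_union.mp (memSeq_subset γ ΓF ΓG π n h) with h' | h'
          · exact hF h'
          · exact hG h'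
        · rcases Finset.mem_union.mp (Mstab_subset γ ΓF ΓG π h) with h' | h'
          · exact hF h'
          · exact hG h'
  choose f hf using key
  refine ⟨Finset.univ.sup f, fun n hn => Finset.ext fun a => ?_⟩
  exact hf a n (le_trans (Finset.le_sup (Finset.mem_univ a)) hn)

lemma stab_unique [Fintype Γ] {γ : V → Finset Γ} {ΓF ΓG : Finset Γ} {π : ℕ → V}
    (hd : ∀ a, a ∈ ΓF → a ∉ ΓG) {M : Finset Γ} {N' : ℕ}
    (hM : ∀ n ≥ N', memSeq γ ΓF ΓG π n = M) : M = Mstab γ ΓF ΓG π := by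
  obtain ⟨N, hN⟩ := memSeq_stab (γ := γ) (π := π) hd
  rw [← hM (max N N') (le_max_right _ _), hN (max N N') (le_max_left _ _)]

lemma sat_restrict (γ : V → Finset Γ) (ΓF ΓG ΓEL : Finset Γ) (π : ℕ → V)
    (ψ : MPForm Γ)
    (hgf : ∀ a ∈ ψ.gfEvents, a ∈ ΓEL ∧ a ∉ ΓF ∪ ΓG)
    (hfg : ∀ a ∈ ψ.fgEvents, a ∈ ΓEL ∧ a ∉ ΓF ∪ ΓG)
    (hf : ∀ a ∈ ψ.fEvents, a ∈ ΓF ∧ a ∉ ΓG)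
    (hg : ∀ a ∈ ψ.gEvents, a ∈ ΓG ∧ a ∉ ΓF) :
    (ψ.restrict (Mstab γ ΓF ΓG π)).sat
      (fun n => (γ (π n) ∩ ΓEL) ∪ memSeq γ ΓF ΓG π n) ↔
    ψ.sat (fun n => γ (π n)) := by
  induction ψ with
  | tt => simp [MPForm.restrict, MPForm.sat]
  | ff => simp [MPForm.restrict, MPForm.sat]
  | gf a =>
    have h := hgf a (by simp [MPForm.gfEvents])
    have hpt : ∀ j, (a ∈ (γ (π j) ∩ ΓEL) ∪ memSeq γ ΓF ΓG π j) ↔ a ∈ γ (π j) := by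
      intro j
      simp only [Finset.mem_union, Finset.mem_inter]
      constructor
      · rintro (⟨h1, _⟩ | h1)
        · exact h1
        · exact absurd (Finset.mem_union.mp (memSeq_subset γ ΓF ΓG π j h1))
            (by simpa [Finset.mem_union] using h.2)
      · exact fun h1 => Or.inl ⟨h1, h.1⟩
    simp only [MPForm.restrict, MPForm.sat, hpt]
  | fg a =>
    have h := hfg a (by simp [MPForm.fgEvents])
    have hpt : ∀ j, (a ∈ (γ (π j) ∩ ΓEL) ∪ memSeq γ ΓF ΓG π j) ↔ a ∈ γ (π j) := by
      intro j
      simp only [Finset.mem_union, Finset.mem_inter]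
      constructor
      · rintro (⟨h1, _⟩ | h1)
        · exact h1
        · exact absurd (Finset.mem_union.mp (memSeq_subset γ ΓF ΓG π j h1))
            (by simpa [Finset.mem_union] using h.2)
      · exact fun h1 => Or.inl ⟨h1, h.1⟩
    simp only [MPForm.restrict, MPForm.sat, hpt]
  | fa a =>
    have h := hf a (by simp [MPForm.fEvents])
    have hM := mem_Mstab_F (γ := γ) (π := π) h.1 h.2
    simp only [MPForm.restrict]
    by_cases hMa : a ∈ Mstab γ ΓF ΓG π
    · rw [if_pos hMa]
      simp only [MPForm.sat, true_iff]
      exact hM.mp hMa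
    · rw [if_neg hMa]
      simp only [MPForm.sat, false_iff]
      rw [hM] at hMa
      push_neg at hMa
      exact fun ⟨i, hi⟩ => hMa i hi
  | ga a =>
    have h := hg a (by simp [MPForm.gEvents])
    have hM := mem_Mstab_G (γ := γ) (π := π) h.1 h.2
    simp only [MPForm.restrict]
    by_cases hMa : a ∈ Mstab γ ΓF ΓG π
    · rw [if_pos hMa]
      simp only [MPForm.sat, true_iff]
      exact hM.mp hMa
    · rw [if_neg hMa]
      simp only [MPForm.sat, false_iff]
      rw [hM] at hMa
      push_neg at hMa
      exact fun h' => by obtain ⟨i, hi⟩ := hMa; exact hi (h' i)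
  | and φ ψ ih1 ih2 =>
    simp only [MPForm.restrict, MPForm.sat]
    exact and_congr
      (ih1 (fun a ha => hgf a (by simp [MPForm.gfEvents]; exact Or.inl ha))
        (fun a ha => hfg a (by simp [MPForm.fgEvents]; exact Or.inl ha))
        (fun a ha => hf a (by simp [MPForm.fEvents]; exact Or.inl ha))
        (fun a ha => hg a (by simp [MPForm.gEvents]; exact Or.inl ha)))
      (ih2 (fun a ha => hgf a (by simp [MPForm.gfEvents]; exact Or.inr ha))
        (fun a ha => hfg a (by simp [MPForm.fgEvents]; exact Or.inr ha))
        (fun a ha => hf a (by simp [MPForm.fEvents]; exact Or.inr ha))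
        (fun a ha => hg a (by simp [MPForm.gEvents]; exact Or.inr ha)))
  | or φ ψ ih1 ih2 =>
    simp only [MPForm.restrict, MPForm.sat]
    exact or_congr
      (ih1 (fun a ha => hgf a (by simp [MPForm.gfEvents]; exact Or.inl ha))
        (fun a ha => hfg a (by simp [MPForm.fgEvents]; exact Or.inl ha))
        (fun a ha => hf a (by simp [MPForm.fEvents]; exact Or.inl ha))
        (fun a ha => hg a (by simp [MPForm.gEvents]; exact Or.inl ha)))
      (ih2 (fun a ha => hgf a (by simp [MPForm.gfEvents]; exact Or.inr ha))
        (fun a ha => hfg a (by simp [MPForm.fgEvents]; exact Or.inr ha))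
        (fun a ha => hf a (by simp [MPForm.fEvents]; exact Or.inr ha))
        (fun a ha => hg a (by simp [MPForm.gEvents]; exact Or.inr ha)))

lemma ind_le (ψ : MPForm Γ) (a : Γ) :
    (if a ∈ ψ.fEvents then 1 else 0) + (if a ∈ ψ.gEvents then 1 else 0) +
    (if a ∈ ψ.gfEvents then 1 else 0) + (if a ∈ ψ.fgEvents then 1 else 0) ≤ ψ.atomCount a := by
  have key : ∀ A B : Finset Γ, (if a ∈ A ∪ B then (1:ℕ) else 0) ≤
      (if a ∈ A then 1 else 0) + (if a ∈ B then 1 else 0) := by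
    intro A B
    by_cases hA : a ∈ A <;> by_cases hB : a ∈ B <;> simp [hA, hB]
  induction ψ with
  | tt => simp [MPForm.fEvents, MPForm.gEvents, MPForm.gfEvents, MPForm.fgEvents, MPForm.atomCount]
  | ff => simp [MPForm.fEvents, MPForm.gEvents, MPForm.gfEvents, MPForm.fgEvents, MPForm.atomCount]
  | gf b =>
    simp only [MPForm.fEvents, MPForm.gEvents, MPForm.gfEvents, MPForm.fgEvents,
      MPForm.atomCount, Finset.notMem_empty, if_false, Finset.mem_singleton]
    by_cases h : a = b <;> simp [h, eq_comm]
  | fg b =>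
    simp only [MPForm.fEvents, MPForm.gEvents, MPForm.gfEvents, MPForm.fgEvents,
      MPForm.atomCount, Finset.notMem_empty, if_false, Finset.mem_singleton]
    by_cases h : a = b <;> simp [h, eq_comm]
  | fa b =>
    simp only [MPForm.fEvents, MPForm.gEvents, MPForm.gfEvents, MPForm.fgEvents,
      MPForm.atomCount, Finset.notMem_empty, if_false, Finset.mem_singleton]
    by_cases h : a = b <;> simp [h, eq_comm]
  | ga b =>
    simp only [MPForm.fEvents, MPForm.gEvents, MPForm.gfEvents, MPForm.fgEvents,
      MPForm.atomCount, Finset.notMem_empty, if_false, Finset.mem_singleton]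
    by_cases h : a = b <;> simp [h, eq_comm]
  | and φ ψ ih1 ih2 =>
    simp only [MPForm.fEvents, MPForm.gEvents, MPForm.gfEvents, MPForm.fgEvents,
      MPForm.atomCount]
    have k1 := key φ.fEvents ψ.fEvents
    have k2 := key φ.gEvents ψ.gEvents
    have k3 := key φ.gfEvents ψ.gfEvents
    have k4 := key φ.fgEvents ψ.fgEvents
    refine le_trans (add_le_add (add_le_add (add_le_add k1 k2) k3) k4) ?_
    linarith
  | or φ ψ ih1 ih2 =>
    simp only [MPForm.fEvents, MPForm.gEvents, MPForm.gfEvents, MPForm.fgEvents,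
      MPForm.atomCount]
    have k1 := key φ.fEvents ψ.fEvents
    have k2 := key φ.gEvents ψ.gEvents
    have k3 := key φ.gfEvents ψ.gfEvents
    have k4 := key φ.fgEvents ψ.fgEvents
    refine le_trans (add_le_add (add_le_add (add_le_add k1 k2) k3) k4) ?_
    linarith

/-- Lifted histories. -/
def liftHist (γ : V → Finset Γ) (ΓF ΓG : Finset Γ) : List V → Finset Γ → List (V × Finset Γ)
  | [], _ => []
  | w :: l, L => (w, L) :: liftHist γ ΓF ΓG l (upd γ ΓF ΓG w L)

def memFold (γ : V → Finset Γ) (ΓF ΓG : Finset Γ) (l : List V) (L : Finset Γ) : Finset Γ :=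
  l.foldl (fun L w => upd γ ΓF ΓG w L) L

lemma liftHist_append (γ : V → Finset Γ) (ΓF ΓG : Finset Γ) (l : List V) (w : V) (L : Finset Γ) :
    liftHist γ ΓF ΓG (l ++ [w]) L = liftHist γ ΓF ΓG l L ++ [(w, memFold γ ΓF ΓG l L)] := by
  induction l generalizing L with
  | nil => simp [liftHist, memFold]
  | cons x l ih => simp [liftHist, memFold, ih]

lemma memSeq_eq_memFold (γ : V → Finset Γ) (ΓF ΓG : Finset Γ) (π : ℕ → V) (n : ℕ) :
    memSeq γ ΓF ΓG π n = memFold γ ΓF ΓG ((List.range n).map π) ΓG := by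
  induction n with
  | zero => rfl
  | succ n ih =>
    rw [List.range_succ, List.map_append]
    show upd γ ΓF ΓG (π n) (memSeq γ ΓF ΓG π n) = _
    rw [ih]
    simp [memFold, List.foldl_append]

lemma map_range_lift (γ : V → Finset Γ) (ΓF ΓG : Finset Γ) (π : ℕ → V) (n : ℕ) :
    (List.range n).map (fun k => (π k, memSeq γ ΓF ΓG π k)) =
    liftHist γ ΓF ΓG ((List.range n).map π) ΓG := by
  induction n with
  | zero => rfl
  | succ n ih =>
    rw [List.range_succ, List.map_append, List.map_append]
    simp only [List.map_cons, List.map_nil]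
    rw [liftHist_append, ih, ← memSeq_eq_memFold]

lemma play_snd (A : Arena V) (γ : V → Finset Γ) (ΓF ΓG : Finset Γ)
    (π' : ℕ → V × Finset Γ)
    (hp : (A.withMemory γ ΓF ΓG).IsPlay π') (h0 : (π' 0).2 = ΓG) (n : ℕ) :
    (π' n).2 = memSeq γ ΓF ΓG (fun k => (π' k).1) n := by
  induction n with
  | zero => exact h0
  | succ n ih =>
    rw [(hp n).2, ih]
    rfl

lemma O2_iff [Fintype Γ] (γ : V → Finset Γ) (φ : MPForm Γ)
    (hunique : ∀ a : Γ, φ.atomCount a ≤ 1) (π : ℕ → V) :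
    (∃ M : Finset Γ, M ⊆ φ.fEvents ∪ φ.gEvents ∧
      (∃ N, ∀ n ≥ N, memSeq γ φ.fEvents φ.gEvents π n = M) ∧
      (φ.restrict M).sat
        (fun n => (γ (π n) ∩ (φ.gfEvents ∪ φ.fgEvents)) ∪ memSeq γ φ.fEvents φ.gEvents π n)) ↔
    φ.sat (fun n => γ (π n)) := by
  have key : ∀ a : Γ,
      (if a ∈ φ.fEvents then 1 else 0) + (if a ∈ φ.gEvents then 1 else 0) +
      (if a ∈ φ.gfEvents then 1 else 0) + (if a ∈ φ.fgEvents then 1 else 0) ≤ 1 :=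
    fun a => le_trans (ind_le φ a) (hunique a)
  have hFG : ∀ a, a ∈ φ.fEvents → a ∉ φ.gEvents := by
    intro a h1 h2
    have h := key a
    rw [if_pos h1, if_pos h2] at h
    linarith [Nat.zero_le (if a ∈ φ.fEvents then 1 else 0),
      Nat.zero_le (if a ∈ φ.gEvents then 1 else 0),
      Nat.zero_le (if a ∈ φ.gfEvents then 1 else 0),
      Nat.zero_le (if a ∈ φ.fgEvents then 1 else 0)]
  have hGF : ∀ a ∈ φ.gEvents, a ∉ φ.fEvents := fun a h1 h2 => hFG a h2 h1
  have hEL : ∀ a ∈ φ.gfEvents ∪ φ.fgEvents, a ∉ φ.fEvents ∪ φ.gEvents := by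
    intro a ha hb
    have h := key a
    rcases Finset.mem_union.mp ha with h1 | h1 <;>
      rcases Finset.mem_union.mp hb with h2 | h2 <;>
      rw [if_pos h1, if_pos h2] at h <;>
      linarith [Nat.zero_le (if a ∈ φ.fEvents then 1 else 0),
      Nat.zero_le (if a ∈ φ.gEvents then 1 else 0),
      Nat.zero_le (if a ∈ φ.gfEvents then 1 else 0),
      Nat.zero_le (if a ∈ φ.fgEvents then 1 else 0)]
  have hsat := sat_restrict γ φ.fEvents φ.gEvents (φ.gfEvents ∪ φ.fgEvents) π φ
    (fun a ha => ⟨Finset.mem_union_left _ ha, hEL a (Finset.mem_union_left _ ha)⟩)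
    (fun a ha => ⟨Finset.mem_union_right _ ha, hEL a (Finset.mem_union_right _ ha)⟩)
    (fun a ha => ⟨ha, hFG a ha⟩)
    (fun a ha => ⟨ha, hGF a ha⟩)
  constructor
  · rintro ⟨M, _, ⟨N, hN⟩, hsatM⟩
    rw [stab_unique hFG hN] at hsatM
    exact hsat.mp hsatM
  · intro h
    exact ⟨Mstab γ φ.fEvents φ.gEvents π, Mstab_subset _ _ _ _, memSeq_stab hFG,
      hsat.mpr h⟩

end MPAux


/-- reduction of Manna-Pnueli games to DAGs of Emerson-Lei
games. The system player wins `v` in the MP game `G = (A, (Γ, γ, φ))` iff it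
wins `(v, Γ_G)` in the game `G₂ = (A', O₂)`, where `O₂` contains exactly
those plays whose memory component eventually stabilizes to some
`M ⊆ Γ_F ∪ Γ_G` and which satisfy `φ_M` under the labeling `γ'`. -/
theorem mp_game_iff_el_dag_game
    {V Γ : Type} [Fintype V] [Fintype Γ] [DecidableEq Γ]
    (A : Arena V) (γ : V → Finset Γ) (φ : MPForm Γ)
    (hunique : ∀ a : Γ, φ.atomCount a ≤ 1)
    (v : V) :
    A.SysWins (fun π => φ.sat (fun n => γ (π n))) v ↔
    (A.withMemory γ φ.fEvents φ.gEvents).SysWins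
      (fun π' => ∃ M : Finset Γ, M ⊆ φ.fEvents ∪ φ.gEvents ∧
        (∃ N, ∀ n ≥ N, (π' n).2 = M) ∧
        (φ.restrict M).sat
          (fun n => ((γ (π' n).1 ∩ (φ.gfEvents ∪ φ.fgEvents)) ∪ (π' n).2)))
      (v, φ.gEvents) := by
  classical
  set ΓF := φ.fEvents
  set ΓG := φ.gEvents
  have hFG : ∀ a, a ∈ ΓF → a ∉ ΓG := by
    intro a h1 h2
    have h := le_trans (MPAux.ind_le φ a) (hunique a)
    rw [if_pos h1, if_pos h2] at h
    linarith [Nat.zero_le (if a ∈ φ.fEvents then 1 else 0),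
      Nat.zero_le (if a ∈ φ.gEvents then 1 else 0),
      Nat.zero_le (if a ∈ φ.gfEvents then 1 else 0),
      Nat.zero_le (if a ∈ φ.fgEvents then 1 else 0)]
  constructor
  · rintro ⟨σ, hval, hwin⟩
    refine ⟨fun h p => (σ (h.map Prod.fst) p.1, upd γ ΓF ΓG p.1 p.2), ?_, ?_⟩
    · intro h p hs
      exact ⟨hval _ _ hs, rfl⟩
    · intro π' hplay h0 hcomp
      set π : ℕ → V := fun n => (π' n).1 with hπ
      have hplayπ : A.IsPlay π := fun n => (hplay n).1
      have hsnd : ∀ n, (π' n).2 = MPAux.memSeq γ ΓF ΓG π n :=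
        MPAux.play_snd A γ ΓF ΓG π' hplay (by rw [h0])
      have hcompπ : A.SysCompatible σ π := by
        intro n hs
        have := hcomp n hs
        have h1 : π (n + 1) = (σ (((List.range n).map π').map Prod.fst) (π n)) := by
          show (π' (n + 1)).1 = _
          rw [this]
        rw [h1, List.map_map]
        rfl
      have hsatπ := hwin π hplayπ (by show (π' 0).1 = v; rw [h0]) hcompπ
      have := (MPAux.O2_iff γ φ hunique π).mpr hsatπ
      obtain ⟨M, hM1, ⟨N, hN⟩, hM3⟩ := this
      refine ⟨M, hM1, ⟨N, fun n hn => by rw [hsnd n]; exact hN n hn⟩, ?_⟩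
      have : (fun n => (γ (π' n).1 ∩ (φ.gfEvents ∪ φ.fgEvents)) ∪ (π' n).2) =
          (fun n => (γ (π n) ∩ (φ.gfEvents ∪ φ.fgEvents)) ∪ MPAux.memSeq γ ΓF ΓG π n) := by
        funext n
        rw [hsnd n]
      rw [this]
      exact hM3
  · rintro ⟨σ', hval', hwin'⟩
    refine ⟨fun h w => (σ' (MPAux.liftHist γ ΓF ΓG h ΓG) (w, MPAux.memFold γ ΓF ΓG h ΓG)).1,
      ?_, ?_⟩
    · intro h w hs
      exact (hval' (MPAux.liftHist γ ΓF ΓG h ΓG) (w, MPAux.memFold γ ΓF ΓG h ΓG) hs).1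
    · intro π hplay h0 hcomp
      set π' : ℕ → V × Finset Γ := fun n => (π n, MPAux.memSeq γ ΓF ΓG π n) with hπ'
      have hplay' : (A.withMemory γ ΓF ΓG).IsPlay π' := fun n => ⟨hplay n, rfl⟩
      have h0' : π' 0 = (v, ΓG) := by rw [hπ']; simp [MPAux.memSeq, h0]
      have hcomp' : (A.withMemory γ ΓF ΓG).SysCompatible
          (fun h p => σ' h p) π' := by
        intro n hs
        have hhist : (List.range n).map π' =
            MPAux.liftHist γ ΓF ΓG ((List.range n).map π) ΓG :=
          MPAux.map_range_lift γ ΓF ΓG π n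
        have hmf : MPAux.memFold γ ΓF ΓG ((List.range n).map π) ΓG =
            MPAux.memSeq γ ΓF ΓG π n := (MPAux.memSeq_eq_memFold γ ΓF ΓG π n).symm
        have hedge := hval' ((List.range n).map π') (π' n) hs
        have hfst : (σ' ((List.range n).map π') (π' n)).1 = π (n + 1) := by
          have := hcomp n hs
          rw [this, hhist]
          congr 1
          rw [hπ']
          simp only
          rw [hmf]
        have hsnd2 : (σ' ((List.range n).map π') (π' n)).2 =
            MPAux.memSeq γ ΓF ΓG π (n + 1) := by
          rw [hedge.2]
          rfl
        have : π' (n + 1) = ((σ' ((List.range n).map π') (π' n)).1,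
            (σ' ((List.range n).map π') (π' n)).2) := by
          rw [hπ']
          simp only
          rw [hfst, hsnd2]
        rw [this]
      have hO2 := hwin' π' hplay' h0' hcomp'
      apply (MPAux.O2_iff γ φ hunique π).mp
      obtain ⟨M, hM1, ⟨N, hN⟩, hM3⟩ := hO2
      exact ⟨M, hM1, ⟨N, fun n hn => hN n hn⟩, hM3⟩
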